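/- Along any solution of the cosmological system with H(t₀) > 0, H is nonincreasing, H(t) > 0 for all t ≥ t₀ (assuming ρ_m(t₀) > 0), and the limit η = lim_{t→∞} H(t) exists with 0 ≤ η ≤ H(t₀). Moreover ∫_{t₀}^∞ (y² + γρ_m + (4/3)ρ_r) dt = 2(H(t₀) − η) < ∞. -/

import Mathlib

open Filter MeasureTheory Set Topology

/-- Along any solution of the flat FLRW cosmological system with `H(t₀) > 0` and
`ρ_m(t₀) > 0`, the Hubble function `H` is nonincreasing, positive for all `t ≥ t₀`,
its limit `η = lim_{t→∞} H(t)` exists with `0 ≤ η ≤ H(t₀)`, and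
`∫_{t₀}^∞ (y² + γρ_m + (4/3)ρ_r) dt = 2(H(t₀) − η) < ∞`. -/
theorem stmt2 (H ρm ρr y φ V χ : ℝ → ℝ) (γ t₀ : ℝ)
    (hγ0 : 0 < γ) (hγ2 : γ < 2)
    (hχpos : ∀ s, 0 < χ s)
    (hVnn : ∀ s, 0 ≤ V s)
    (hH : ∀ t, t₀ ≤ t →
      HasDerivAt H (-(1/2) * (γ * ρm t + (4/3) * ρr t + (y t)^2)) t)
    (hm : ∀ t, t₀ ≤ t →
      HasDerivAt ρm (-3*γ*H t*ρm t - (1/2)*(4-3*γ)*ρm t*y t*(deriv χ (φ t) / χ (φ t))) t)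
    (hr : ∀ t, t₀ ≤ t → HasDerivAt ρr (-4*H t*ρr t) t)
    (hy : ∀ t, t₀ ≤ t →
      HasDerivAt y (-3*H t*y t - deriv V (φ t) + (1/2)*(4-3*γ)*ρm t*(deriv χ (φ t) / χ (φ t))) t)
    (hφ : ∀ t, t₀ ≤ t → HasDerivAt φ (y t) t)
    (hconstraint : ∀ t, t₀ ≤ t →
      3*(H t)^2 = (1/2)*(y t)^2 + V (φ t) + ρm t + ρr t)
    (hrnn : ∀ t, t₀ ≤ t → 0 ≤ ρr t)
    (hmnn : ∀ t, t₀ ≤ t → 0 ≤ ρm t)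
    (hm0 : 0 < ρm t₀) (hH0 : 0 < H t₀) :
    AntitoneOn H (Set.Ici t₀) ∧
    (∀ t, t₀ ≤ t → 0 < H t) ∧
    ∃ η : ℝ, 0 ≤ η ∧ η ≤ H t₀ ∧ Tendsto H atTop (nhds η) ∧
      IntegrableOn (fun t => (y t)^2 + γ * ρm t + (4/3) * ρr t) (Set.Ici t₀) ∧
      ∫ t in Set.Ici t₀, ((y t)^2 + γ * ρm t + (4/3) * ρr t) = 2 * (H t₀ - η) := by
  set f : ℝ → ℝ := fun t => (y t)^2 + γ * ρm t + (4/3) * ρr t with hf_def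
  clear_value f
  -- H has derivative -(1/2) * f t at t ≥ t₀
  have hH' : ∀ t, t₀ ≤ t → HasDerivAt H (-(1/2) * f t) t := by
    intro t ht
    have := hH t ht
    convert this using 1
    simp only [hf_def]; ring
  have hfnn : ∀ t, t₀ ≤ t → 0 ≤ f t := by
    intro t ht
    have h1 := hmnn t ht
    have h2 := hrnn t ht
    have h3 := sq_nonneg (y t)
    simp only [hf_def]
    nlinarith
  -- the key bound f ≤ 6 H²
  have hfbound : ∀ t, t₀ ≤ t → f t ≤ 6 * (H t)^2 := by
    intro t ht
    have hc := hconstraint t ht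
    have h1 := hmnn t ht
    have h2 := hrnn t ht
    have h3 := hVnn (φ t)
    simp only [hf_def]
    nlinarith
  -- continuity of H on Ici t₀
  have hHcont : ContinuousOn H (Ici t₀) := fun t ht =>
    (hH t ht).continuousAt.continuousWithinAt
  -- antitone
  have hanti : AntitoneOn H (Ici t₀) := by
    apply antitoneOn_of_deriv_nonpos (convex_Ici t₀) hHcont
    · intro x hx
      rw [interior_Ici] at hx
      exact (hH' x hx.le).differentiableAt.differentiableWithinAt
    · intro x hx
      rw [interior_Ici] at hx
      rw [(hH' x hx.le).deriv]
      have h0 := hfnn x hx.le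
      linarith
  -- positivity
  have hpos : ∀ t, t₀ ≤ t → 0 < H t := by
    by_contra hc
    push_neg at hc
    obtain ⟨t₁, ht₁, hH1⟩ := hc
    set Z : Set ℝ := {t ∈ Icc t₀ t₁ | H t ≤ 0} with hZ_def
    have hZne : Z.Nonempty := ⟨t₁, ⟨ht₁, le_refl t₁⟩, hH1⟩
    have hZbdd : BddBelow Z := ⟨t₀, fun z hz => hz.1.1⟩
    set c := sInf Z with hc_def
    have hc_cl : c ∈ closure Z := csInf_mem_closure hZne hZbdd
    have hc_Icc : c ∈ Icc t₀ t₁ := by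
      have : closure Z ⊆ Icc t₀ t₁ := by
        refine closure_minimal ?_ isClosed_Icc
        exact fun z hz => hz.1
      exact this hc_cl
    have hc0 : t₀ ≤ c := hc_Icc.1
    -- H c ≤ 0 by continuity
    have hHc : H c ≤ 0 := by
      haveI : (𝓝[Z] c).NeBot := mem_closure_iff_nhdsWithin_neBot.mp hc_cl
      refine le_of_tendsto (f := H) (x := 𝓝[Z] c)
        ((hH c hc0).continuousAt.tendsto.mono_left nhdsWithin_le_nhds) ?_
      exact eventually_nhdsWithin_of_forall fun z hz => hz.2
    have htc : t₀ < c := by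
      rcases lt_or_eq_of_le hc0 with h | h
      · exact h
      · exfalso; rw [← h] at hHc; linarith
    -- H > 0 on [t₀, c)
    have hposIco : ∀ t ∈ Ico t₀ c, 0 < H t := by
      intro t ht
      by_contra hle
      push_neg at hle
      have : t ∈ Z := ⟨⟨ht.1, le_trans ht.2.le hc_Icc.2⟩, hle⟩
      have := csInf_le hZbdd this
      exact absurd this (not_le.mpr ht.2)
    -- g = 1/H - 3t is antitone on Ico t₀ c
    set g : ℝ → ℝ := fun t => (H t)⁻¹ - 3 * t with hg_def
    have hgderiv : ∀ x ∈ Ico t₀ c, HasDerivAt g (-(-(1/2) * f x) / (H x)^2 - 3) x := by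
      intro x hx
      have h3 : HasDerivAt (fun t : ℝ => 3 * t) 3 x := by
        simpa using (hasDerivAt_id x).const_mul (3 : ℝ)
      exact ((hH' x hx.1).inv (ne_of_gt (hposIco x hx))).sub h3
    have hganti : AntitoneOn g (Ico t₀ c) := by
      apply antitoneOn_of_deriv_nonpos (convex_Ico t₀ c)
      · intro x hx
        exact (hgderiv x hx).continuousAt.continuousWithinAt
      · intro x hx
        rw [interior_Ico] at hx
        exact (hgderiv x ⟨hx.1.le, hx.2⟩).differentiableAt.differentiableWithinAt
      · intro x hx
        rw [interior_Ico] at hx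
        rw [(hgderiv x ⟨hx.1.le, hx.2⟩).deriv]
        have hb := hfbound x hx.1.le
        have hHx := hposIco x ⟨hx.1.le, hx.2⟩
        have hHx2 : 0 < (H x)^2 := by positivity
        rw [sub_nonpos, div_le_iff₀ hHx2]
        nlinarith
    -- hence 1/H is bounded on [t₀, c)
    set M : ℝ := (H t₀)⁻¹ + 3 * (c - t₀) with hM_def
    have hMpos : 0 < M := by
      have : 0 < (H t₀)⁻¹ := inv_pos.mpr hH0
      have : 0 ≤ c - t₀ := by linarith
      simp only [hM_def]
      positivity
    have hHlb : ∀ t ∈ Ico t₀ c, M⁻¹ ≤ H t := by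
      intro t ht
      have h1 : g t ≤ g t₀ := hganti ⟨le_refl t₀, htc⟩ ht ht.1
      have h2 : (H t)⁻¹ ≤ M := by
        simp only [hg_def, hM_def] at h1 ⊢
        have : t - t₀ ≤ c - t₀ := by have := ht.2; linarith
        linarith
      have hHt := hposIco t ht
      calc M⁻¹ ≤ ((H t)⁻¹)⁻¹ := inv_anti₀ (by positivity) h2
        _ = H t := inv_inv _
    -- limit from the left at c gives H c ≥ M⁻¹ > 0, contradiction
    have : M⁻¹ ≤ H c := by
      haveI : (𝓝[<] c).NeBot := inferInstance
      refine ge_of_tendsto (f := H) (x := 𝓝[<] c)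
        ((hH c hc0).continuousAt.tendsto.mono_left nhdsWithin_le_nhds) ?_
      filter_upwards [Ioo_mem_nhdsLT_of_mem (⟨htc, le_refl c⟩ : c ∈ Ioc t₀ c)]
        with t ht
      exact hHlb t ⟨ht.1.le, ht.2⟩
    have : 0 < H c := lt_of_lt_of_le (inv_pos.mpr hMpos) this
    linarith
  refine ⟨hanti, hpos, ?_⟩
  -- the limit
  set G : ℝ → ℝ := fun t => H (max t t₀) with hG_def
  have hGanti : Antitone G := by
    intro s t hst
    exact hanti (le_max_right s t₀) (le_max_right t t₀)
      (max_le_max hst (le_refl t₀))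
  have hGbdd : BddBelow (range G) := by
    refine ⟨0, ?_⟩
    rintro x ⟨t, rfl⟩
    exact (hpos _ (le_max_right t t₀)).le
  set η : ℝ := ⨅ t, G t with hη_def
  have hGtendsto : Tendsto G atTop (𝓝 η) := tendsto_atTop_ciInf hGanti hGbdd
  have hHG : H =ᶠ[atTop] G := by
    filter_upwards [eventually_ge_atTop t₀] with t ht
    simp only [hG_def, max_eq_left ht]
  have hHtendsto : Tendsto H atTop (𝓝 η) := hGtendsto.congr' hHG.symm
  have hη0 : 0 ≤ η := by
    refine ge_of_tendsto hHtendsto ?_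
    filter_upwards [eventually_ge_atTop t₀] with t ht
    exact (hpos t ht).le
  have hηH0 : η ≤ H t₀ := by
    have : G t₀ = H t₀ := by simp [hG_def]
    rw [← this]
    exact ciInf_le hGbdd t₀
  -- integrability and the value of the integral via improper FTC
  have hg2deriv : ∀ x ∈ Ici t₀, HasDerivAt (fun t => -2 * H t) (f x) x := by
    intro x hx
    have : HasDerivAt (fun t => -2 * H t) (-2 * (-(1/2) * f x)) x := (hH' x hx).const_mul (-2 : ℝ)
    convert this using 1
    ring
  have hg2tendsto : Tendsto (fun t => -2 * H t) atTop (𝓝 (-2 * η)) :=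
    hHtendsto.const_mul (-2)
  have hint : IntegrableOn f (Ioi t₀) :=
    integrableOn_Ioi_deriv_of_nonneg' hg2deriv (fun x hx => hfnn x hx.le) hg2tendsto
  have hval : ∫ x in Ioi t₀, f x = (-2 * η) - (-2 * H t₀) :=
    integral_Ioi_of_hasDerivAt_of_nonneg' hg2deriv (fun x hx => hfnn x hx.le) hg2tendsto
  refine ⟨η, hη0, hηH0, hHtendsto, ?_, ?_⟩
  · rw [integrableOn_Ici_iff_integrableOn_Ioi]
    exact hint
  · rw [integral_Ici_eq_integral_Ioi]
    rw [hval]; ring
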